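/- arXiv:1204.2435 — 2 statements merged into one kernel-verified Lean document; each statement's English description precedes it below -/
import Mathlib

section
/- Suppose ε₀ > 0 and z₀, y₀, β : (0, ε₀) → (0,∞) are functions such that, for every α ∈ (0, ε₀), z₀(α) (∫ρ/∫λ) Σ_{t∈I_c} γ_t A_t′(z₀(α))/A_t(z₀(α)) = β(α) and (β(α)∫λ)(1 + y₀(α)z₀(α)) = y₀(α)z₀(α), and assume β(α) → 0 as α → 0⁺. Then y₀(α) / (C^{1/r} · (β(α) ∫λ)^{(r−1)/r}) → 1 as α → 0⁺. -/
open Finset Filter Real Topology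

/-- The CN weight enumerating polynomial `A_t(z) = 1 + ∑_{u=r_t}^{s_t} a_{t,u} z^u`. -/
noncomputable def AIcc {ι : Type*} (r s : ι → ℕ) (a : ι → ℕ → ℝ) (t : ι) (z : ℝ) : ℝ :=
  1 + ∑ u ∈ Finset.Icc (r t) (s t), a t u * z ^ u

/-- `∫ρ = ∑_t ρ_t/s_t`. -/
noncomputable def intden {ι : Type*} [Fintype ι] (w : ι → ℝ) (n : ι → ℕ) : ℝ :=
  ∑ t, w t / n t

/-- `γ_t = ρ_t/(s_t ∫ρ)`. -/
noncomputable def nodefrac {ι : Type*} [Fintype ι] (w : ι → ℝ) (n : ι → ℕ) (t : ι) : ℝ :=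
  w t / (n t * intden w n)

/-- `C = r ∑_{t : r_t = r} ρ_t a_{t,r} / s_t`, where `r = min_t r_t`. -/
noncomputable def Cdef {ι : Type*} [Fintype ι] (rc sc : ι → ℕ) (a : ι → ℕ → ℝ)
    (ρ : ι → ℝ) (rmin : ℕ) : ℝ :=
  rmin * ∑ t ∈ Finset.univ.filter (fun t => rc t = rmin), ρ t * a t rmin / sc t

noncomputable def Npoly {ι : Type*} (r s : ι → ℕ) (a : ι → ℕ → ℝ) (t : ι) (z : ℝ) : ℝ :=
  ∑ u ∈ Finset.Icc (r t) (s t), (u : ℝ) * a t u * z ^ u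

lemma AIcc_hasDerivAt {ι : Type*} (rc sc : ι → ℕ) (a : ι → ℕ → ℝ) (t : ι) (z : ℝ) :
    HasDerivAt (AIcc rc sc a t)
      (∑ u ∈ Finset.Icc (rc t) (sc t), a t u * (u * z ^ (u - 1))) z := by
  unfold AIcc
  apply HasDerivAt.const_add
  apply HasDerivAt.fun_sum
  intro u _
  exact (hasDerivAt_pow u z).const_mul (a t u)

lemma mul_deriv_AIcc {ι : Type*} (rc sc : ι → ℕ) (a : ι → ℕ → ℝ)
    (h2r : ∀ t, 2 ≤ rc t) (t : ι) (z : ℝ) :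
    z * deriv (AIcc rc sc a t) z = Npoly rc sc a t z := by
  rw [(AIcc_hasDerivAt rc sc a t z).deriv, Finset.mul_sum, Npoly]
  apply Finset.sum_congr rfl
  intro u hu
  have hu1 : 1 ≤ u := le_trans (le_trans one_le_two (h2r t)) (Finset.mem_Icc.mp hu).1
  have : z ^ (u - 1) * z = z ^ u := by
    rw [← pow_succ, Nat.sub_add_cancel hu1]
  calc z * (a t u * (u * z ^ (u - 1))) = (u:ℝ) * a t u * (z ^ (u-1) * z) := by ring
    _ = (u:ℝ) * a t u * z ^ u := by rw [this]

noncomputable def fq {ι : Type*} [Fintype ι] (rc sc : ι → ℕ) (a : ι → ℕ → ℝ) (ρ : ι → ℝ)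
    (z : ℝ) : ℝ :=
  ∑ t, (ρ t / sc t) * (Npoly rc sc a t z / AIcc rc sc a t z)

noncomputable def gq {ι : Type*} [Fintype ι] (rc sc : ι → ℕ) (a : ι → ℕ → ℝ) (ρ : ι → ℝ)
    (rmin : ℕ) (z : ℝ) : ℝ :=
  ∑ t, (ρ t / sc t) *
    ((∑ u ∈ Finset.Icc (rc t) (sc t), (u : ℝ) * a t u * z ^ (u - rmin)) / AIcc rc sc a t z)

lemma one_le_AIcc {ι : Type*} (rc sc : ι → ℕ) (a : ι → ℕ → ℝ) (hann : ∀ t u, 0 ≤ a t u)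
    (t : ι) {z : ℝ} (hz : 0 ≤ z) : 1 ≤ AIcc rc sc a t z := by
  unfold AIcc
  have : 0 ≤ ∑ u ∈ Finset.Icc (rc t) (sc t), a t u * z ^ u :=
    Finset.sum_nonneg fun u _ => mul_nonneg (hann t u) (pow_nonneg hz u)
  linarith

lemma AIcc_zero {ι : Type*} (rc sc : ι → ℕ) (a : ι → ℕ → ℝ) (h2r : ∀ t, 2 ≤ rc t) (t : ι) :
    AIcc rc sc a t 0 = 1 := by
  unfold AIcc
  rw [Finset.sum_eq_zero, add_zero]
  intro u hu
  have : 1 ≤ u := le_trans (le_trans one_le_two (h2r t)) (Finset.mem_Icc.mp hu).1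
  rw [zero_pow (by omega), mul_zero]

lemma fq_eq_pow_mul_gq {ι : Type*} [Fintype ι] (rc sc : ι → ℕ) (a : ι → ℕ → ℝ) (ρ : ι → ℝ)
    (rmin : ℕ) (hrle : ∀ t, rmin ≤ rc t) (z : ℝ) :
    fq rc sc a ρ z = z ^ rmin * gq rc sc a ρ rmin z := by
  unfold fq gq
  rw [Finset.mul_sum]
  apply Finset.sum_congr rfl
  intro t _
  have : (∑ u ∈ Finset.Icc (rc t) (sc t), z ^ rmin * ((u:ℝ) * a t u * z ^ (u - rmin)))
      = Npoly rc sc a t z := by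
    apply Finset.sum_congr rfl
    intro u hu
    have h1 : rmin ≤ u := le_trans (hrle t) (Finset.mem_Icc.mp hu).1
    rw [show z ^ rmin * ((u:ℝ) * a t u * z ^ (u - rmin)) = (u:ℝ) * a t u * (z ^ rmin * z ^ (u - rmin)) by ring,
      ← pow_add, Nat.add_sub_cancel' h1]
  rw [show z ^ rmin * ((ρ t / sc t) * ((∑ u ∈ Finset.Icc (rc t) (sc t), (u:ℝ) * a t u * z ^ (u - rmin)) / AIcc rc sc a t z)) = (ρ t / sc t) * ((∑ u ∈ Finset.Icc (rc t) (sc t), z ^ rmin * ((u:ℝ) * a t u * z ^ (u - rmin))) / AIcc rc sc a t z) by rw [← Finset.mul_sum]; ring, this]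

lemma gq_zero {ι : Type*} [Fintype ι] (rc sc : ι → ℕ) (a : ι → ℕ → ℝ) (ρ : ι → ℝ)
    (rmin : ℕ) (h2r : ∀ t, 2 ≤ rc t) (hrs : ∀ t, rc t ≤ sc t) (hrle : ∀ t, rmin ≤ rc t) :
    gq rc sc a ρ rmin 0 = Cdef rc sc a ρ rmin := by
  unfold gq Cdef
  rw [Finset.mul_sum, Finset.sum_filter]
  apply Finset.sum_congr rfl
  intro t _
  rw [AIcc_zero rc sc a h2r t, div_one]
  by_cases hc : rc t = rmin
  · have hsum : (∑ u ∈ Finset.Icc (rc t) (sc t), (u : ℝ) * a t u * (0:ℝ) ^ (u - rmin))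
        = (rmin : ℝ) * a t rmin := by
      rw [Finset.sum_eq_single_of_mem rmin (Finset.mem_Icc.mpr ⟨hc.le, hc ▸ hrs t⟩)]
      · rw [Nat.sub_self, pow_zero, mul_one]
      · intro u hu hne
        have h1 : rmin < u := lt_of_le_of_ne (le_trans (hrle t) (Finset.mem_Icc.mp hu).1) (Ne.symm hne)
        rw [zero_pow (by omega), mul_zero]
    rw [hsum, if_pos hc]
    ring
  · have hlt : rmin < rc t := lt_of_le_of_ne (hrle t) (fun h => hc h.symm)
    have hsum : (∑ u ∈ Finset.Icc (rc t) (sc t), (u : ℝ) * a t u * (0:ℝ) ^ (u - rmin)) = 0 := by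
      apply Finset.sum_eq_zero
      intro u hu
      have h1 : rmin < u := lt_of_lt_of_le hlt (Finset.mem_Icc.mp hu).1
      rw [zero_pow (by omega), mul_zero]
    rw [hsum, if_neg hc, mul_zero]

lemma continuous_AIcc {ι : Type*} (rc sc : ι → ℕ) (a : ι → ℕ → ℝ) (t : ι) :
    Continuous (AIcc rc sc a t) := by
  unfold AIcc
  exact continuous_const.add (continuous_finset_sum _ fun u _ =>
    (continuous_const.mul (continuous_pow u)))

lemma continuousAt_gq_zero {ι : Type*} [Fintype ι] (rc sc : ι → ℕ) (a : ι → ℕ → ℝ)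
    (ρ : ι → ℝ) (rmin : ℕ) (h2r : ∀ t, 2 ≤ rc t) :
    ContinuousAt (gq rc sc a ρ rmin) 0 := by
  unfold gq
  apply tendsto_finset_sum
  intro t _
  show ContinuousAt _ _
  apply ContinuousAt.mul continuousAt_const
  apply ContinuousAt.div
  · exact (continuous_finset_sum _ fun u _ =>
      continuous_const.mul (continuous_pow (u - rmin))).continuousAt
  · exact (continuous_AIcc rc sc a t).continuousAt
  · rw [AIcc_zero rc sc a h2r t]; norm_num

lemma Npoly_nonneg {ι : Type*} (rc sc : ι → ℕ) (a : ι → ℕ → ℝ) (hann : ∀ t u, 0 ≤ a t u)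
    (t : ι) {z : ℝ} (hz : 0 ≤ z) : 0 ≤ Npoly rc sc a t z :=
  Finset.sum_nonneg fun u _ => mul_nonneg (mul_nonneg (Nat.cast_nonneg u) (hann t u))
    (pow_nonneg hz u)

lemma fq_lower {ι : Type*} [Fintype ι] (rc sc : ι → ℕ) (a : ι → ℕ → ℝ) (ρ : ι → ℝ)
    (h2r : ∀ t, 2 ≤ rc t) (hrs : ∀ t, rc t ≤ sc t) (hann : ∀ t u, 0 ≤ a t u)
    (har : ∀ t, 0 < a t (rc t)) (hρ : ∀ t, 0 < ρ t) (t0 : ι) {δ : ℝ} (hδ : 0 < δ) :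
    ∃ c > 0, ∀ z, δ ≤ z → c ≤ fq rc sc a ρ z := by
  set Aδ := AIcc rc sc a t0 δ with hAδdef
  have hsc0 : (0:ℝ) < sc t0 := by
    have := lt_of_lt_of_le (lt_of_lt_of_le two_pos (h2r t0)) (hrs t0)
    exact_mod_cast this
  have hAδ : 1 < Aδ := by
    rw [hAδdef]
    unfold AIcc
    have hmem : rc t0 ∈ Finset.Icc (rc t0) (sc t0) := Finset.mem_Icc.mpr ⟨le_refl _, hrs t0⟩
    have h1 : a t0 (rc t0) * δ ^ (rc t0) ≤ ∑ u ∈ Finset.Icc (rc t0) (sc t0), a t0 u * δ ^ u :=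
      Finset.single_le_sum (fun u _ => mul_nonneg (hann t0 u) (pow_nonneg hδ.le u)) hmem
    have h2 : 0 < a t0 (rc t0) * δ ^ (rc t0) := mul_pos (har t0) (pow_pos hδ _)
    linarith
  refine ⟨(ρ t0 / sc t0) * (2 * (1 - 1/Aδ)), ?_, ?_⟩
  · apply mul_pos (div_pos (hρ t0) hsc0)
    have : 1/Aδ < 1 := by
      rw [div_lt_one (lt_trans one_pos hAδ)]; exact hAδ
    linarith
  · intro z hz
    have hz0 : (0:ℝ) ≤ z := le_trans hδ.le hz
    have hAz : 1 ≤ AIcc rc sc a t0 z := one_le_AIcc rc sc a hann t0 hz0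
    have hAzpos : 0 < AIcc rc sc a t0 z := lt_of_lt_of_le one_pos hAz
    have hmono : Aδ ≤ AIcc rc sc a t0 z := by
      rw [hAδdef]; unfold AIcc
      have : ∀ u ∈ Finset.Icc (rc t0) (sc t0), a t0 u * δ ^ u ≤ a t0 u * z ^ u :=
        fun u _ => mul_le_mul_of_nonneg_left (pow_le_pow_left₀ hδ.le hz u) (hann t0 u)
      have := Finset.sum_le_sum this
      linarith
    have hN2 : 2 * (AIcc rc sc a t0 z - 1) ≤ Npoly rc sc a t0 z := by
      unfold AIcc Npoly
      rw [add_sub_cancel_left, Finset.mul_sum]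
      apply Finset.sum_le_sum
      intro u hu
      have hu2 : (2:ℝ) ≤ u := by exact_mod_cast le_trans (h2r t0) (Finset.mem_Icc.mp hu).1
      have : 0 ≤ a t0 u * z ^ u := mul_nonneg (hann t0 u) (pow_nonneg hz0 u)
      nlinarith
    have hterm : 2 * (1 - 1/Aδ) ≤ Npoly rc sc a t0 z / AIcc rc sc a t0 z := by
      have h1 : 1/AIcc rc sc a t0 z ≤ 1/Aδ :=
        one_div_le_one_div_of_le (lt_trans one_pos hAδ) hmono
      have h2 : 2 * (AIcc rc sc a t0 z - 1) / AIcc rc sc a t0 z ≤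
          Npoly rc sc a t0 z / AIcc rc sc a t0 z := (div_le_div_iff_of_pos_right hAzpos).mpr hN2
      have h3 : 2 * (AIcc rc sc a t0 z - 1) / AIcc rc sc a t0 z
          = 2 * (1 - 1/AIcc rc sc a t0 z) := by
        field_simp
      nlinarith
    calc (ρ t0 / sc t0) * (2 * (1 - 1/Aδ))
        ≤ (ρ t0 / sc t0) * (Npoly rc sc a t0 z / AIcc rc sc a t0 z) := by
          apply mul_le_mul_of_nonneg_left hterm (le_of_lt (div_pos (hρ t0) hsc0))
      _ ≤ fq rc sc a ρ z := by
          unfold fq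
          apply Finset.single_le_sum (f := fun t => (ρ t / sc t) * (Npoly rc sc a t z / AIcc rc sc a t z)) ?_ (Finset.mem_univ t0)
          intro t _
          have hsct : (0:ℝ) < sc t := by
            exact_mod_cast lt_of_lt_of_le (lt_of_lt_of_le two_pos (h2r t)) (hrs t)
          exact mul_nonneg (le_of_lt (div_pos (hρ t) hsct))
            (div_nonneg (Npoly_nonneg rc sc a hann t hz0)
              (le_of_lt (lt_of_lt_of_le one_pos (one_le_AIcc rc sc a hann t hz0))))

lemma final_alg (b z g C : ℝ) (r : ℕ) (hb : 0 < b) (hz : 0 < z) (hC : 0 < C)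
    (hr : (r:ℝ) ≠ 0) (hbfq : b = z ^ r * g) (y : ℝ)
    (hyz : y * z * (1 - b) = b) (h1b : 0 < 1 - b) :
    y / (C ^ ((1:ℝ)/r) * b ^ (((r:ℝ)-1)/r)) = (g/C) ^ ((1:ℝ)/r) / (1-b) := by
  have hzr : (0:ℝ) < z ^ r := pow_pos hz r
  have hg : 0 < g := by
    have hge : g = b / z ^ r := by rw [hbfq]; field_simp
    rw [hge]; exact div_pos hb hzr
  have hy0 : y = b / ((1 - b) * z) := by
    field_simp
    linear_combination hyz
  have hb1 : b ^ ((1:ℝ)/r) * b ^ (((r:ℝ)-1)/r) = b := by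
    rw [← Real.rpow_add hb]
    have : (1:ℝ)/r + ((r:ℝ)-1)/r = 1 := by field_simp; ring
    rw [this, Real.rpow_one]
  have hz1 : ((z:ℝ) ^ (r:ℕ)) ^ ((1:ℝ)/r) = z := by
    rw [← Real.rpow_natCast z r, ← Real.rpow_mul hz.le, mul_one_div, div_self hr,
      Real.rpow_one]
  have hnum_eq : (g / C) ^ ((1:ℝ)/r) = b ^ ((1:ℝ)/r) / (z * C ^ ((1:ℝ)/r)) := by
    have hgC' : g / C = b / (z ^ r * C) := by rw [hbfq]; field_simp
    rw [hgC', Real.div_rpow hb.le (mul_nonneg hzr.le hC.le),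
      Real.mul_rpow hzr.le hC.le, hz1]
  rw [hnum_eq, hy0]
  have hbp1 : 0 < b ^ (((r:ℝ)-1)/r) := Real.rpow_pos_of_pos hb _
  have hbp2 : 0 < b ^ ((1:ℝ)/r) := Real.rpow_pos_of_pos hb _
  have hCp : 0 < C ^ ((1:ℝ)/r) := Real.rpow_pos_of_pos hC _
  rw [div_div, div_div, div_eq_div_iff (by positivity) (by positivity)]
  linear_combination (-(z * C ^ ((1:ℝ)/r) * (1 - b))) * hb1

/-- if positive functions `z₀, y₀, β` on `(0,ε₀)` satisfy (E1) and (E4) and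
`β(α) → 0` as `α → 0⁺`, then `y₀(α)/(C^{1/r} (β(α)∫λ)^{(r−1)/r}) → 1` as `α → 0⁺`. -/
theorem stmt_17 {ι : Type*} [Fintype ι] [Nonempty ι]
    (rc sc : ι → ℕ) (h2r : ∀ t, 2 ≤ rc t) (hrs : ∀ t, rc t ≤ sc t)
    (a : ι → ℕ → ℝ) (hann : ∀ t u, 0 ≤ a t u) (har : ∀ t, 0 < a t (rc t))
    (ρ : ι → ℝ) (hρ : ∀ t, 0 < ρ t) (hρ1 : ∑ t, ρ t = 1)
    (intL : ℝ) (hintL : 0 < intL)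
    (rmin : ℕ) (hrle : ∀ t, rmin ≤ rc t) (hrex : ∃ t, rc t = rmin)
    (ε₀ : ℝ) (hε₀ : 0 < ε₀)
    (z₀ y₀ β : ℝ → ℝ)
    (hpos : ∀ α ∈ Set.Ioo 0 ε₀, 0 < z₀ α ∧ 0 < y₀ α ∧ 0 < β α)
    (hE1 : ∀ α ∈ Set.Ioo 0 ε₀,
      z₀ α * ((intden ρ sc / intL) *
        ∑ t, nodefrac ρ sc t * deriv (AIcc rc sc a t) (z₀ α) / AIcc rc sc a t (z₀ α)) = β α)
    (hE4 : ∀ α ∈ Set.Ioo 0 ε₀,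
      (β α * intL) * (1 + y₀ α * z₀ α) = y₀ α * z₀ α)
    (hβ0 : Filter.Tendsto β (nhdsWithin 0 (Set.Ioi 0)) (𝓝 0)) :
    Filter.Tendsto
      (fun α => y₀ α /
        (Cdef rc sc a ρ rmin ^ ((1 : ℝ) / rmin) *
          (β α * intL) ^ (((rmin : ℝ) - 1) / rmin)))
      (nhdsWithin 0 (Set.Ioi 0)) (𝓝 1) := by
  have hsct : ∀ t, (0:ℝ) < sc t := fun t => by
    exact_mod_cast lt_of_lt_of_le (lt_of_lt_of_le two_pos (h2r t)) (hrs t)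
  have hrmin2 : 2 ≤ rmin := by obtain ⟨t1, ht1⟩ := hrex; exact ht1 ▸ h2r t1
  have hrminR : (0:ℝ) < rmin := by exact_mod_cast lt_of_lt_of_le two_pos hrmin2
  have hrne : (rmin:ℝ) ≠ 0 := ne_of_gt hrminR
  set L := nhdsWithin (0:ℝ) (Set.Ioi 0) with hL
  have hIoo : Set.Ioo 0 ε₀ ∈ L := Ioo_mem_nhdsGT_of_mem ⟨le_refl 0, hε₀⟩
  have hintden : 0 < intden ρ sc :=
    Finset.sum_pos (fun t _ => div_pos (hρ t) (hsct t)) Finset.univ_nonempty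
  -- key identity
  have hkey : ∀ α ∈ Set.Ioo 0 ε₀, β α * intL = fq rc sc a ρ (z₀ α) := by
    intro α hα
    have h := hE1 α hα
    have h2 : β α * intL = z₀ α * intden ρ sc *
        ∑ t, nodefrac ρ sc t * deriv (AIcc rc sc a t) (z₀ α) / AIcc rc sc a t (z₀ α) := by
      rw [← h]; field_simp
    rw [h2, Finset.mul_sum]
    unfold fq
    apply Finset.sum_congr rfl
    intro t _
    rw [← mul_deriv_AIcc rc sc a h2r t (z₀ α)]
    have hnf : intden ρ sc * nodefrac ρ sc t = ρ t / sc t := by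
      unfold nodefrac
      field_simp [ne_of_gt hintden, ne_of_gt (hsct t)]
    calc z₀ α * intden ρ sc * (nodefrac ρ sc t * deriv (AIcc rc sc a t) (z₀ α) / AIcc rc sc a t (z₀ α))
        = (intden ρ sc * nodefrac ρ sc t) * (z₀ α * deriv (AIcc rc sc a t) (z₀ α) / AIcc rc sc a t (z₀ α)) := by
          ring
      _ = ρ t / sc t * (z₀ α * deriv (AIcc rc sc a t) (z₀ α) / AIcc rc sc a t (z₀ α)) := by
          rw [hnf]
  -- β·intL → 0
  have hbL : Tendsto (fun α => β α * intL) L (𝓝 0) := by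
    have := hβ0.mul_const intL
    simpa using this
  -- z₀ → 0
  have hz0 : Tendsto z₀ L (𝓝 0) := by
    rw [Metric.tendsto_nhds]
    intro ε hε
    obtain ⟨c, hc, hclb⟩ := fq_lower rc sc a ρ h2r hrs hann har hρ (Classical.arbitrary ι) hε
    filter_upwards [hIoo, hbL (Iio_mem_nhds hc)] with α hα hlt
    have hzpos := (hpos α hα).1
    rw [Real.dist_eq, sub_zero, abs_of_pos hzpos]
    by_contra hge
    push_neg at hge
    have := hclb (z₀ α) hge
    rw [← hkey α hα] at this
    exact absurd hlt (not_lt.mpr this)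
  -- gq(z₀) → C
  have hC : 0 < Cdef rc sc a ρ rmin := by
    unfold Cdef
    apply mul_pos hrminR
    apply Finset.sum_pos
    · intro t ht
      have := (Finset.mem_filter.mp ht).2
      exact div_pos (mul_pos (hρ t) (this ▸ har t)) (hsct t)
    · obtain ⟨t1, ht1⟩ := hrex
      exact ⟨t1, Finset.mem_filter.mpr ⟨Finset.mem_univ t1, ht1⟩⟩
  have hgt : Tendsto (fun α => gq rc sc a ρ rmin (z₀ α)) L (𝓝 (Cdef rc sc a ρ rmin)) := by
    have hcont := continuousAt_gq_zero rc sc a ρ rmin h2r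
    have := hcont.tendsto.comp hz0
    rwa [gq_zero rc sc a ρ rmin h2r hrs hrle] at this
  have hgC : Tendsto (fun α => gq rc sc a ρ rmin (z₀ α) / Cdef rc sc a ρ rmin) L (𝓝 1) := by
    have := hgt.div_const (Cdef rc sc a ρ rmin)
    rwa [div_self (ne_of_gt hC)] at this
  -- the limit function
  have hnum : Tendsto (fun α => (gq rc sc a ρ rmin (z₀ α) / Cdef rc sc a ρ rmin) ^ ((1:ℝ)/rmin)) L (𝓝 1) := by
    have := hgC.rpow_const (p := (1:ℝ)/rmin) (Or.inl one_ne_zero)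
    rwa [Real.one_rpow] at this
  have hden : Tendsto (fun α => 1 - β α * intL) L (𝓝 1) := by
    have := tendsto_const_nhds (x := (1:ℝ)) (f := L) |>.sub hbL
    simpa using this
  have hlim : Tendsto (fun α => (gq rc sc a ρ rmin (z₀ α) / Cdef rc sc a ρ rmin) ^ ((1:ℝ)/rmin) / (1 - β α * intL)) L (𝓝 1) := by
    have := hnum.div hden one_ne_zero
    rw [div_one] at this; exact this
  apply Tendsto.congr' ?_ hlim
  filter_upwards [hIoo] with α hα
  obtain ⟨hz, hy, hβp⟩ := hpos α hα
  have hb : 0 < β α * intL := mul_pos hβp hintL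
  have hbfq : β α * intL = z₀ α ^ rmin * gq rc sc a ρ rmin (z₀ α) := by
    rw [hkey α hα, fq_eq_pow_mul_gq rc sc a ρ rmin hrle]
  have hE := hE4 α hα
  have hyz : y₀ α * z₀ α * (1 - β α * intL) = β α * intL := by linear_combination -hE
  have hw : 0 < y₀ α * z₀ α := mul_pos hy hz
  have h1b : 0 < 1 - β α * intL := by nlinarith [hyz, hw, hb]
  exact (final_alg (β α * intL) (z₀ α) (gq rc sc a ρ rmin (z₀ α)) (Cdef rc sc a ρ rmin)
    rmin hb hz hC hrne hbfq (y₀ α) hyz h1b).symm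
end

section
/- For every α ∈ (0,1), setting a = α−1, b = 15α−10, c = 15α−5, d = α, ρ = (3ac − b²)/(9a²) and μ = (9abc − 27a²d − 2b³)/(54a³), the discriminant satisfies Δ = ρ³ + μ² < 0. -/
/-- for every `α ∈ (0,1)`, with `a = α−1`, `b = 15α−10`, `c = 15α−5`, `d = α`,
`ρ = (3ac − b²)/(9a²)` and `μ = (9abc − 27a²d − 2b³)/(54a³)`, the discriminant of the cubic
arising from the saddle-point equation of the (3,6)-regular LDPC ensemble satisfies
`Δ = ρ³ + μ² < 0`. -/
theorem stmt_19 :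
    ∀ α ∈ Set.Ioo (0 : ℝ) 1,
      let a : ℝ := α - 1
      let b : ℝ := 15 * α - 10
      let c : ℝ := 15 * α - 5
      let d : ℝ := α
      let ρ : ℝ := (3 * a * c - b ^ 2) / (9 * a ^ 2)
      let μ : ℝ := (9 * a * b * c - 27 * a ^ 2 * d - 2 * b ^ 3) / (54 * a ^ 3)
      ρ ^ 3 + μ ^ 2 < 0 := by
  intro α hα
  obtain ⟨h0, h1⟩ := hα
  have ha : α - 1 ≠ 0 := by intro h; nlinarith
  show ((3 * (α - 1) * (15 * α - 5) - (15 * α - 10) ^ 2) / (9 * (α - 1) ^ 2)) ^ 3 +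
      ((9 * (α - 1) * (15 * α - 10) * (15 * α - 5) - 27 * (α - 1) ^ 2 * α -
          2 * (15 * α - 10) ^ 3) / (54 * (α - 1) ^ 3)) ^ 2 < 0
  have key : ((3 * (α - 1) * (15 * α - 5) - (15 * α - 10) ^ 2) / (9 * (α - 1) ^ 2)) ^ 3 +
      ((9 * (α - 1) * (15 * α - 10) * (15 * α - 5) - 27 * (α - 1) ^ 2 * α -
          2 * (15 * α - 10) ^ 3) / (54 * (α - 1) ^ 3)) ^ 2 =
      -(((α - 1) ^ 2 * (46656 * (2 * α - 1) ^ 4 + 3888 * (2 * α - 1) ^ 2 + 3456)) /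
        (2916 * (α - 1) ^ 6)) := by
    field_simp
    ring
  rw [key, neg_lt, neg_zero]
  apply div_pos
  · have h2 : (0 : ℝ) < (α - 1) ^ 2 := by positivity
    nlinarith [sq_nonneg (2 * α - 1), pow_le_pow_left₀ (sq_nonneg (2*α-1)) (le_refl ((2*α-1)^2)) 2]
  · positivity
end
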